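/- For all real p, q and nonnegative integers m, n: (2π)^{-1/2} ∫_ℝ e^{iyq} h_m(y + p/2) h_n(y - p/2) dy = (-1)^n · 2^{(m+n-1)/2} · e^{-(p²+q²)/4} · H_{m,n}((p+iq)/√2, (p-iq)/√2), where h_n(x) = e^{-x²/2} H_n(x) is the Hermite function. -/

import Mathlib

open MeasureTheory Complex Real

noncomputable def Hphys (n : ℕ) (x : ℝ) : ℝ :=
  (-1 : ℝ)^n * Real.exp (x^2) * iteratedDeriv n (fun t : ℝ => Real.exp (-t^2)) x

noncomputable def hFun (n : ℕ) (x : ℝ) : ℝ := Real.exp (-x^2/2) * Hphys n x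

noncomputable def Hc (m n : ℕ) (z : ℂ) : ℂ :=
  ∑ k ∈ Finset.range (min m n + 1),
    (-1 : ℂ)^k * (Nat.factorial k : ℂ) * (Nat.choose m k : ℂ) * (Nat.choose n k : ℂ)
      * z^(m-k) * (starRingEnd ℂ z)^(n-k)

noncomputable def Lag (n α : ℕ) (x : ℂ) : ℂ :=
  ∑ k ∈ Finset.range (n + 1),
    (-1 : ℂ)^k * (Nat.choose (n + α) (n - k) : ℂ) * x^k / (Nat.factorial k : ℂ)

namespace FWaux
open Filter


noncomputable def g : ℝ → ℝ := fun t => Real.exp (-t^2)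

lemma contDiff_g : ContDiff ℝ ⊤ g :=
  Real.contDiff_exp.comp ((contDiff_id.pow 2).neg)

lemma diff_iter (n : ℕ) : Differentiable ℝ (iteratedDeriv n g) :=
  contDiff_g.differentiable_iteratedDeriv n (by simp)

lemma hasDerivAt_iter (n : ℕ) (x : ℝ) :
    HasDerivAt (iteratedDeriv n g) (iteratedDeriv (n+1) g x) x := by
  rw [iteratedDeriv_succ]
  exact ((diff_iter n) x).hasDerivAt

lemma g1 (x : ℝ) : iteratedDeriv 1 g x = -2*x*g x := by
  rw [iteratedDeriv_one]
  have h : HasDerivAt (fun t : ℝ => -t^2) (-2*x) x := by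
    simpa [Pi.neg_def] using ((hasDerivAt_pow 2 x)).neg
  have : HasDerivAt g (-2*x*g x) x := by
    unfold g
    simpa [g, mul_comm, Function.comp_def] using (Real.hasDerivAt_exp (-x^2)).comp x h
  exact this.deriv

lemma grec : ∀ (n : ℕ) (x : ℝ), iteratedDeriv (n+2) g x
    = -2*x*iteratedDeriv (n+1) g x - (2*n+2)*iteratedDeriv n g x := by
  intro n
  induction n with
  | zero =>
    intro x
    have h1 : iteratedDeriv 1 g = fun y => -2*y*g y := funext g1
    rw [iteratedDeriv_succ, h1]
    have hd : HasDerivAt (fun y => -2*y*g y) (-2*g x + (-2*x)*(iteratedDeriv 1 g x)) x := by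
      have : HasDerivAt (fun y : ℝ => -2*y) (-2) x := by
        simpa using (hasDerivAt_id x).const_mul (-2 : ℝ)
      simpa [iteratedDeriv_zero, Pi.mul_def] using this.mul (hasDerivAt_iter 0 x)
    rw [hd.deriv, g1, iteratedDeriv_zero]
    push_cast; ring
  | succ n ih =>
    intro x
    have h1 : iteratedDeriv (n+2) g = fun y => -2*y*iteratedDeriv (n+1) g y
        - (2*n+2)*iteratedDeriv n g y := funext ih
    rw [show n+1+2 = (n+2)+1 by ring, iteratedDeriv_succ, h1]
    have hd : HasDerivAt (fun y => -2*y*iteratedDeriv (n+1) g y - (2*n+2)*iteratedDeriv n g y)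
        ((-2*iteratedDeriv (n+1) g x + (-2*x)*(iteratedDeriv (n+2) g x))
          - (2*n+2)*iteratedDeriv (n+1) g x) x := by
      have h2 : HasDerivAt (fun y : ℝ => -2*y) (-2) x := by
        simpa using (hasDerivAt_id x).const_mul (-2 : ℝ)
      exact (h2.mul (hasDerivAt_iter (n+1) x)).sub ((hasDerivAt_iter n x).const_mul ((2:ℝ)*n+2))
    rw [hd.deriv, ih x]
    push_cast; ring


lemma Hphys_def (n : ℕ) (x : ℝ) :
    Hphys n x = (-1 : ℝ)^n * Real.exp (x^2) * iteratedDeriv n g x := rfl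

lemma Hphys_zero (x : ℝ) : Hphys 0 x = 1 := by
  simp [Hphys_def, iteratedDeriv_zero, g, ← Real.exp_add]

lemma Hphys_one (x : ℝ) : Hphys 1 x = 2*x := by
  rw [Hphys_def, g1]
  have h1 : Real.exp (x^2) * Real.exp (-x^2) = 1 := by rw [← Real.exp_add]; simp
  unfold g
  linear_combination (2*x) * h1

lemma Hrec (n : ℕ) (x : ℝ) :
    Hphys (n+2) x = 2*x*Hphys (n+1) x - (2*n+2)*Hphys n x := by
  simp only [Hphys_def, grec n x]
  rw [pow_succ, pow_succ]
  ring

lemma he (x : ℝ) : HasDerivAt (fun y : ℝ => Real.exp (y^2)) (2*x*Real.exp (x^2)) x := by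
  have h : HasDerivAt (fun t : ℝ => t^2) (2*x) x := by simpa using hasDerivAt_pow 2 x
  simpa [mul_comm, Function.comp_def] using (Real.hasDerivAt_exp (x^2)).comp x h

lemma hasDerivAt_Hphys (n : ℕ) (x : ℝ) :
    HasDerivAt (Hphys n) (2*x*Hphys n x - Hphys (n+1) x) x := by
  have hfun : Hphys n = fun y => ((-1:ℝ)^n * Real.exp (y^2)) * iteratedDeriv n g y := rfl
  have h := ((he x).const_mul ((-1:ℝ)^n)).mul (hasDerivAt_iter n x)
  rw [hfun]
  refine h.congr_deriv ?_
  simp only [Hphys_def, pow_succ]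
  ring

lemma hasDerivAt_Hphys_succ (n : ℕ) (x : ℝ) :
    HasDerivAt (Hphys (n+1)) ((2*n+2) * Hphys n x) x := by
  have h := hasDerivAt_Hphys (n+1) x
  rwa [Hrec, show 2*x*Hphys (n+1) x - (2*x*Hphys (n+1) x - (2*↑n+2)*Hphys n x)
    = (2*↑n+2) * Hphys n x by ring] at h

lemma hFun_zero (x : ℝ) : hFun 0 x = Real.exp (-x^2/2) := by
  simp [hFun, Hphys_zero]

lemma hFun_rec (k : ℕ) (x : ℝ) :
    hFun (k+1) x = 2*x*hFun k x - 2*k*hFun (k-1) x := by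
  cases k with
  | zero => simp [hFun, Hphys_one, Hphys_zero]; ring
  | succ j => simp only [hFun, Hrec j x, Nat.add_sub_cancel]; push_cast; ring

lemma hasDerivAt_hFun (k : ℕ) (x : ℝ) :
    HasDerivAt (hFun k) (2*k*hFun (k-1) x - x * hFun k x) x := by
  have hg : HasDerivAt (fun y : ℝ => Real.exp (-y^2/2)) (-x * Real.exp (-x^2/2)) x := by
    have h : HasDerivAt (fun t : ℝ => -t^2/2) (-x) x := by
      have h' := (hasDerivAt_pow 2 x).neg.div_const 2
      refine h'.congr_deriv ?_
      simp; ring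
    simpa [mul_comm, Function.comp_def] using (Real.hasDerivAt_exp (-x^2/2)).comp x h
  cases k with
  | zero =>
    have h0 : HasDerivAt (Hphys 0) 0 x := by
      have := hasDerivAt_Hphys 0 x
      rwa [Hphys_one, Hphys_zero, show 2*x*1 - 2*x = (0:ℝ) by ring] at this
    have key := hg.mul h0
    have hf : (fun y => Real.exp (-y^2/2)) * Hphys 0 = hFun 0 := rfl
    rw [hf] at key
    refine key.congr_deriv ?_
    simp [hFun, Hphys_zero]
  | succ j =>
    have := hg.mul (hasDerivAt_Hphys_succ j x)
    refine this.congr_deriv ?_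
    simp only [hFun, Nat.add_sub_cancel]
    push_cast; ring


lemma Hphys_poly (k : ℕ) : ∃ P : Polynomial ℝ, ∀ x, Hphys k x = P.eval x := by
  induction k with
  | zero => exact ⟨1, by simp [Hphys_zero]⟩
  | succ j ih =>
    obtain ⟨P, hP⟩ := ih
    refine ⟨Polynomial.C 2 * Polynomial.X * P - P.derivative, fun x => ?_⟩
    have hfun : Hphys j = fun y => P.eval y := funext hP
    have hd := (hasDerivAt_Hphys j x).deriv
    rw [hfun, Polynomial.deriv] at hd
    simp only at hd
    have hPx := hP x
    have h2 : Hphys (j+1) x = 2*x*P.eval x - P.derivative.eval x := by linarith [hd, hPx]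
    rw [h2]
    simp

lemma continuous_hFun (k : ℕ) : Continuous (hFun k) :=
  continuous_iff_continuousAt.2 fun x => (hasDerivAt_hFun k x).continuousAt

lemma abs_le_one_add_sq (t : ℝ) : |t| ≤ 1 + t^2 := by
  nlinarith [abs_nonneg t, _root_.sq_abs t]

lemma integrable_pow_gauss (k : ℕ) : Integrable (fun x : ℝ => |x|^k * Real.exp (-x^2)) := by
  have hb : Integrable (fun x : ℝ => ((k.factorial : ℝ) * Real.exp 1) * Real.exp (-(1/2) * x^2)) :=
    (integrable_exp_neg_mul_sq (by norm_num)).const_mul _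
  refine hb.mono' ?_ ?_
  · exact ((_root_.continuous_abs.pow k).mul ((continuous_pow 2).neg.rexp)).aestronglyMeasurable
  · filter_upwards with x
    have h1 : |x|^k ≤ (k.factorial : ℝ) * Real.exp |x| := by
      have := Real.pow_div_factorial_le_exp _ (abs_nonneg x) k
      have hk : (0:ℝ) < k.factorial := by positivity
      calc |x|^k = (|x|^k / k.factorial) * k.factorial := by field_simp
        _ ≤ Real.exp |x| * k.factorial := by
            apply mul_le_mul_of_nonneg_right this hk.le
        _ = _ := by ring
    have h2 : Real.exp |x| * Real.exp (-x^2) ≤ Real.exp 1 * Real.exp (-(1/2)*x^2) := by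
      rw [← Real.exp_add, ← Real.exp_add]
      apply Real.exp_le_exp.2
      have := abs_le_one_add_sq x
      nlinarith [_root_.sq_abs x]
    have hnorm : ‖|x|^k * Real.exp (-x^2)‖ = |x|^k * Real.exp (-x^2) := by
      rw [Real.norm_eq_abs, abs_mul, _root_.abs_pow, _root_.abs_abs, abs_of_pos (Real.exp_pos _)]
    rw [hnorm]
    calc |x|^k * Real.exp (-x^2) ≤ ((k.factorial : ℝ) * Real.exp |x|) * Real.exp (-x^2) := by
          apply mul_le_mul_of_nonneg_right h1 (Real.exp_pos _).le
      _ = (k.factorial : ℝ) * (Real.exp |x| * Real.exp (-x^2)) := by ring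
      _ ≤ (k.factorial : ℝ) * (Real.exp 1 * Real.exp (-(1/2)*x^2)) := by
          apply mul_le_mul_of_nonneg_left h2 (by positivity)
      _ = ((k.factorial : ℝ) * Real.exp 1) * Real.exp (-(1/2)*x^2) := by ring

lemma integrable_poly_gauss (P : Polynomial ℝ) :
    Integrable (fun x : ℝ => P.eval x * Real.exp (-x^2)) := by
  have : (fun x : ℝ => P.eval x * Real.exp (-x^2))
      = fun x => ∑ i ∈ Finset.range (P.natDegree + 1), P.coeff i * (x^i * Real.exp (-x^2)) := by
    funext x
    rw [Polynomial.eval_eq_sum_range, Finset.sum_mul]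
    congr 1; funext i; ring
  rw [this]
  apply integrable_finset_sum
  intro i _
  apply Integrable.const_mul
  refine (integrable_pow_gauss i).mono' ?_ ?_
  · exact ((continuous_pow i).mul ((continuous_pow 2).neg.rexp)).aestronglyMeasurable
  · filter_upwards with x
    rw [norm_mul, Real.norm_eq_abs, Real.norm_eq_abs, _root_.abs_pow, abs_of_pos (Real.exp_pos _)]


noncomputable def F (p q : ℝ) (m n : ℕ) : ℝ → ℂ := fun y =>
  Complex.exp (Complex.I * y * q) * (hFun m (y + p/2) : ℂ) * (hFun n (y - p/2) : ℂ)

lemma F_norm (p q : ℝ) (m n : ℕ) (y : ℝ) :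
    ‖F p q m n y‖ = |hFun m (y + p/2)| * |hFun n (y - p/2)| := by
  simp only [F, norm_mul, Complex.norm_exp, Complex.norm_real, Real.norm_eq_abs]
  have : (Complex.I * y * q).re = 0 := by simp
  rw [this, Real.exp_zero, one_mul]

lemma continuous_F (p q : ℝ) (m n : ℕ) : Continuous (F p q m n) := by
  apply Continuous.mul
  apply Continuous.mul
  · exact Complex.continuous_exp.comp (by continuity)
  · exact Complex.continuous_ofReal.comp ((continuous_hFun m).comp (by continuity))
  · exact Complex.continuous_ofReal.comp ((continuous_hFun n).comp (by continuity))

lemma F_bound (p q : ℝ) (m n : ℕ) : ∃ (R : Polynomial ℝ) (c : ℝ),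
    ∀ y, ‖F p q m n y‖ ≤ c * (R.eval y * Real.exp (-y^2)) := by
  obtain ⟨Pm, hPm⟩ := Hphys_poly m
  obtain ⟨Pn, hPn⟩ := Hphys_poly n
  refine ⟨(1 + (Pm.comp (Polynomial.X + Polynomial.C (p/2)))^2)
      * (1 + (Pn.comp (Polynomial.X - Polynomial.C (p/2)))^2), Real.exp (-p^2/4), fun y => ?_⟩
  set A := Pm.eval (y + p/2)
  set B := Pn.eval (y - p/2)
  have hRe : ((1 + (Pm.comp (Polynomial.X + Polynomial.C (p/2)))^2)
      * (1 + (Pn.comp (Polynomial.X - Polynomial.C (p/2)))^2)).eval y = (1 + A^2) * (1 + B^2) := by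
    simp [Polynomial.eval_comp, A, B]
  have hm : |hFun m (y + p/2)| = Real.exp (-(y+p/2)^2/2) * |A| := by
    rw [hFun, abs_mul, abs_of_pos (Real.exp_pos _), hPm]
  have hn : |hFun n (y - p/2)| = Real.exp (-(y-p/2)^2/2) * |B| := by
    rw [hFun, abs_mul, abs_of_pos (Real.exp_pos _), hPn]
  have hexp : Real.exp (-(y+p/2)^2/2) * Real.exp (-(y-p/2)^2/2)
      = Real.exp (-p^2/4) * Real.exp (-y^2) := by
    rw [← Real.exp_add, ← Real.exp_add]
    congr 1
    ring
  rw [F_norm, hm, hn, hRe]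
  have h1 : |A| ≤ 1 + A^2 := abs_le_one_add_sq A
  have h2 : |B| ≤ 1 + B^2 := abs_le_one_add_sq B
  calc Real.exp (-(y+p/2)^2/2) * |A| * (Real.exp (-(y-p/2)^2/2) * |B|)
      = (Real.exp (-(y+p/2)^2/2) * Real.exp (-(y-p/2)^2/2)) * (|A| * |B|) := by ring
    _ ≤ (Real.exp (-(y+p/2)^2/2) * Real.exp (-(y-p/2)^2/2)) * ((1+A^2) * (1+B^2)) := by
        apply mul_le_mul_of_nonneg_left _ (by positivity)
        apply mul_le_mul h1 h2 (abs_nonneg _) (by positivity)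
    _ = Real.exp (-p^2/4) * ((1+A^2) * (1+B^2) * Real.exp (-y^2)) := by rw [hexp]; ring

lemma integrable_F (p q : ℝ) (m n : ℕ) : Integrable (F p q m n) := by
  obtain ⟨R, c, hRc⟩ := F_bound p q m n
  refine Integrable.mono' ((integrable_poly_gauss R).const_mul c) (continuous_F p q m n).aestronglyMeasurable ?_
  filter_upwards with y
  simpa [mul_assoc] using hRc y

lemma poly_gauss_tendsto_atTop (R : Polynomial ℝ) :
    Tendsto (fun y : ℝ => R.eval y * Real.exp (-y^2)) atTop (nhds 0) := by
  have h1 := R.tendsto_div_exp_atTop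
  have h2 : Tendsto (fun y : ℝ => Real.exp (y - y^2)) atTop (nhds 0) := by
    apply Real.tendsto_exp_atBot.comp
    apply tendsto_atBot_mono (fun y : ℝ => show y - y^2 ≤ 1 - y by nlinarith [sq_nonneg (y-1)])
    have := (tendsto_neg_atTop_atBot (G := ℝ))
    exact (tendsto_atBot_add_const_left atTop 1 this).congr (fun y => by ring)
  have := h1.mul h2
  rw [mul_zero] at this
  apply this.congr
  intro y
  rw [show y - y^2 = y + -y^2 by ring, Real.exp_add]
  field_simp

lemma poly_gauss_tendsto_atBot (R : Polynomial ℝ) :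
    Tendsto (fun y : ℝ => R.eval y * Real.exp (-y^2)) atBot (nhds 0) := by
  have h := (poly_gauss_tendsto_atTop (R.comp (-Polynomial.X))).comp tendsto_neg_atBot_atTop
  apply h.congr
  intro y
  simp [Function.comp, Polynomial.eval_comp]

lemma tendsto_F_atTop (p q : ℝ) (m n : ℕ) : Tendsto (F p q m n) atTop (nhds 0) := by
  obtain ⟨R, c, hRc⟩ := F_bound p q m n
  have hg : Tendsto (fun y : ℝ => c * (R.eval y * Real.exp (-y^2))) atTop (nhds 0) := by
    simpa using (poly_gauss_tendsto_atTop R).const_mul c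
  exact squeeze_zero_norm hRc hg

lemma tendsto_F_atBot (p q : ℝ) (m n : ℕ) : Tendsto (F p q m n) atBot (nhds 0) := by
  obtain ⟨R, c, hRc⟩ := F_bound p q m n
  have hg : Tendsto (fun y : ℝ => c * (R.eval y * Real.exp (-y^2))) atBot (nhds 0) := by
    simpa using (poly_gauss_tendsto_atBot R).const_mul c
  exact squeeze_zero_norm hRc hg


lemma hasDerivAt_F_raw (p q : ℝ) (m n : ℕ) (y : ℝ) :
    HasDerivAt (F p q m n)
      ((Complex.exp (Complex.I * y * q) * (Complex.I * q)
          * (hFun m (y + p/2) : ℂ) + Complex.exp (Complex.I * y * q)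
          * ((2*m*hFun (m-1) (y+p/2) - (y+p/2)*hFun m (y+p/2) : ℝ) : ℂ))
          * (hFun n (y - p/2) : ℂ)
        + Complex.exp (Complex.I * y * q) * (hFun m (y + p/2) : ℂ)
          * ((2*n*hFun (n-1) (y-p/2) - (y-p/2)*hFun n (y-p/2) : ℝ) : ℂ)) y := by
  have hinner : HasDerivAt (fun y : ℝ => Complex.I * (y : ℂ) * (q : ℂ)) (Complex.I * q) y := by
    have h1 := (Complex.ofRealCLM.hasDerivAt (x := y)).const_mul Complex.I
    have h2 := h1.mul_const ((q : ℂ))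
    simpa using h2
  have hexp : HasDerivAt (fun y : ℝ => Complex.exp (Complex.I * (y:ℂ) * (q:ℂ)))
      (Complex.exp (Complex.I * (y:ℂ) * (q:ℂ)) * (Complex.I * q)) y := hinner.cexp
  have hm : HasDerivAt (fun y : ℝ => ((hFun m (y + p/2) : ℝ) : ℂ))
      (((2*m*hFun (m-1) (y+p/2) - (y+p/2)*hFun m (y+p/2) : ℝ)) : ℂ) y := by
    have h1 : HasDerivAt (fun y : ℝ => hFun m (y + p/2))
        (2*m*hFun (m-1) (y+p/2) - (y+p/2)*hFun m (y+p/2)) y := by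
      have := (hasDerivAt_hFun m (y + p/2)).comp y ((hasDerivAt_id y).add_const (p/2))
      simpa [Function.comp_def] using this
    exact h1.ofReal_comp
  have hn : HasDerivAt (fun y : ℝ => ((hFun n (y - p/2) : ℝ) : ℂ))
      (((2*n*hFun (n-1) (y-p/2) - (y-p/2)*hFun n (y-p/2) : ℝ)) : ℂ) y := by
    have h1 : HasDerivAt (fun y : ℝ => hFun n (y - p/2))
        (2*n*hFun (n-1) (y-p/2) - (y-p/2)*hFun n (y-p/2)) y := by
      have := (hasDerivAt_hFun n (y - p/2)).comp y ((hasDerivAt_id y).sub_const (p/2))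
      simpa [Function.comp_def] using this
    exact h1.ofReal_comp
  exact (hexp.mul hm).mul hn

lemma key1 (p q : ℝ) (m n : ℕ) (y : ℝ) :
    HasDerivAt (F p q m n)
      (((p : ℂ) + Complex.I * q) * F p q m n y + 2*n * F p q m (n-1) y - F p q (m+1) n y) y := by
  have h := hasDerivAt_F_raw p q m n y
  convert h using 1
  simp only [F]
  rw [hFun_rec m (y + p/2)]
  push_cast
  ring

lemma key2 (p q : ℝ) (m n : ℕ) (y : ℝ) :
    HasDerivAt (F p q m n)
      (-((p : ℂ) - Complex.I * q) * F p q m n y + 2*m * F p q (m-1) n y - F p q m (n+1) y) y := by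
  have h := hasDerivAt_F_raw p q m n y
  convert h using 1
  simp only [F]
  rw [hFun_rec n (y - p/2)]
  push_cast
  ring

lemma integral_deriv_zero {f f' : ℝ → ℂ} (hd : ∀ x, HasDerivAt f (f' x) x)
    (hi : Integrable f') (h1 : Tendsto f atTop (nhds 0)) (h2 : Tendsto f atBot (nhds 0)) :
    ∫ x, f' x = 0 := by
  have hIic := MeasureTheory.integral_Iic_of_hasDerivAt_of_tendsto' (a := (0:ℝ))
    (fun x _ => hd x) hi.integrableOn h2
  have hIoi := MeasureTheory.integral_Ioi_of_hasDerivAt_of_tendsto' (a := (0:ℝ))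
    (fun x _ => hd x) hi.integrableOn h1
  rw [← intervalIntegral.integral_Iic_add_Ioi (b := (0:ℝ)) hi.integrableOn hi.integrableOn,
    hIic, hIoi]
  ring

noncomputable def Iint (p q : ℝ) (m n : ℕ) : ℂ := ∫ y : ℝ, F p q m n y

lemma rec1 (p q : ℝ) (m n : ℕ) :
    Iint p q (m+1) n = ((p : ℂ) + Complex.I * q) * Iint p q m n + 2*n * Iint p q m (n-1) := by
  have ha : Integrable (fun y : ℝ => ((p : ℂ) + Complex.I * q) * F p q m n y) :=
    (integrable_F p q m n).const_mul _
  have hb : Integrable (fun y : ℝ => 2*(n:ℂ) * F p q m (n-1) y) :=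
    (integrable_F p q m (n-1)).const_mul _
  have hab : Integrable (fun y : ℝ => ((p : ℂ) + Complex.I * q) * F p q m n y
      + 2*(n:ℂ) * F p q m (n-1) y) := ha.add hb
  have h0 : (∫ y : ℝ, (((p : ℂ) + Complex.I * q) * F p q m n y
      + 2*(n:ℂ) * F p q m (n-1) y - F p q (m+1) n y)) = 0 :=
    integral_deriv_zero (key1 p q m n) (hab.sub (integrable_F p q (m+1) n))
      (tendsto_F_atTop p q m n) (tendsto_F_atBot p q m n)
  have hsplit : ((p : ℂ) + Complex.I * q) * Iint p q m n + 2*(n:ℂ) * Iint p q m (n-1)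
      - Iint p q (m+1) n = ∫ y : ℝ, (((p : ℂ) + Complex.I * q) * F p q m n y
      + 2*(n:ℂ) * F p q m (n-1) y - F p q (m+1) n y) := by
    unfold Iint
    rw [← MeasureTheory.integral_const_mul, ← MeasureTheory.integral_const_mul,
      ← MeasureTheory.integral_add ha hb, ← MeasureTheory.integral_sub hab (integrable_F p q (m+1) n)]
  rw [h0] at hsplit
  linear_combination -hsplit

lemma rec2 (p q : ℝ) (m n : ℕ) :
    Iint p q m (n+1) = -((p : ℂ) - Complex.I * q) * Iint p q m n + 2*m * Iint p q (m-1) n := by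
  have ha : Integrable (fun y : ℝ => -((p : ℂ) - Complex.I * q) * F p q m n y) :=
    (integrable_F p q m n).const_mul _
  have hb : Integrable (fun y : ℝ => 2*(m:ℂ) * F p q (m-1) n y) :=
    (integrable_F p q (m-1) n).const_mul _
  have hab : Integrable (fun y : ℝ => -((p : ℂ) - Complex.I * q) * F p q m n y
      + 2*(m:ℂ) * F p q (m-1) n y) := ha.add hb
  have h0 : (∫ y : ℝ, (-((p : ℂ) - Complex.I * q) * F p q m n y
      + 2*(m:ℂ) * F p q (m-1) n y - F p q m (n+1) y)) = 0 :=
    integral_deriv_zero (key2 p q m n) (hab.sub (integrable_F p q m (n+1)))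
      (tendsto_F_atTop p q m n) (tendsto_F_atBot p q m n)
  have hsplit : -((p : ℂ) - Complex.I * q) * Iint p q m n + 2*(m:ℂ) * Iint p q (m-1) n
      - Iint p q m (n+1) = ∫ y : ℝ, (-((p : ℂ) - Complex.I * q) * F p q m n y
      + 2*(m:ℂ) * F p q (m-1) n y - F p q m (n+1) y) := by
    unfold Iint
    rw [← MeasureTheory.integral_const_mul, ← MeasureTheory.integral_const_mul,
      ← MeasureTheory.integral_add ha hb, ← MeasureTheory.integral_sub hab (integrable_F p q m (n+1))]
  rw [h0] at hsplit
  linear_combination -hsplit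


lemma Iint00 (p q : ℝ) :
    Iint p q 0 0 = (Real.sqrt Real.pi : ℂ) * Complex.exp (-((p:ℂ)^2+(q:ℂ)^2)/4) := by
  have hfe : ∀ y : ℝ, F p q 0 0 y
      = Complex.exp (-((p:ℂ)^2)/4) * (Complex.exp (Complex.I * q * y) * Complex.exp (-1 * (y:ℂ)^2)) := by
    intro y
    unfold F
    rw [hFun_zero, hFun_zero, Complex.ofReal_exp, Complex.ofReal_exp,
      ← Complex.exp_add, ← Complex.exp_add, ← Complex.exp_add, ← Complex.exp_add]
    congr 1
    push_cast
    ring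
  unfold Iint
  rw [MeasureTheory.integral_congr_ae (Filter.Eventually.of_forall hfe),
    MeasureTheory.integral_const_mul,
    fourierIntegral_gaussian (by norm_num : (0:ℝ) < (1:ℂ).re) (q:ℂ)]
  have h1 : ((Real.pi : ℂ) / 1) ^ (1/2 : ℂ) = (Real.sqrt Real.pi : ℂ) := by
    rw [div_one, Real.sqrt_eq_rpow, show ((1:ℂ)/2) = ((1/2 : ℝ) : ℂ) by norm_num,
      ← Complex.ofReal_cpow Real.pi_pos.le]
  rw [h1]
  rw [show Complex.exp (-(p:ℂ)^2/4) * ((Real.sqrt Real.pi : ℂ) * Complex.exp (-(q:ℂ)^2/(4*1)))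
    = (Real.sqrt Real.pi : ℂ) * (Complex.exp (-(p:ℂ)^2/4) * Complex.exp (-(q:ℂ)^2/(4*1))) by ring,
    ← Complex.exp_add]
  congr 1
  ring

lemma Hc_m0 (m : ℕ) (z : ℂ) : Hc m 0 z = z^m := by
  simp [Hc]

lemma Hc_0n (n : ℕ) (z : ℂ) : Hc 0 n z = (starRingEnd ℂ z)^n := by
  simp [Hc]

noncomputable def Hc' (m n : ℕ) (z : ℂ) : ℂ :=
  ∑ k ∈ Finset.range (n + 1),
    (-1 : ℂ)^k * (Nat.factorial k : ℂ) * (Nat.choose m k : ℂ) * (Nat.choose n k : ℂ)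
      * z^(m-k) * (starRingEnd ℂ z)^(n-k)

lemma Hc_eq (m n : ℕ) (z : ℂ) : Hc m n z = Hc' m n z := by
  unfold Hc Hc'
  apply Finset.sum_subset
  · intro k hk
    simp only [Finset.mem_range] at *
    have := min_le_right m n
    omega
  · intro k hk hnk
    simp only [Finset.mem_range] at hk hnk
    have hmk : m < k := by
      rcases Nat.lt_or_ge m n with h | h
      · simp [Nat.min_eq_left h.le] at hnk; omega
      · simp [Nat.min_eq_right h] at hnk; omega
    have : Nat.choose m k = 0 := Nat.choose_eq_zero_of_lt hmk
    simp [this]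

lemma Hc'_rec (m n : ℕ) (z : ℂ) :
    Hc' (m+1) (n+1) z = z * Hc' m (n+1) z - (n+1) * Hc' m n z := by
  set w := starRingEnd ℂ z with hwdef
  unfold Hc'
  rw [Finset.sum_range_succ' (fun k => (-1 : ℂ)^k * (Nat.factorial k : ℂ)
      * (Nat.choose (m+1) k : ℂ) * (Nat.choose (n+1) k : ℂ) * z^(m+1-k) * w^(n+1-k)) (n+1),
    Finset.sum_range_succ' (fun k => (-1 : ℂ)^k * (Nat.factorial k : ℂ)
      * (Nat.choose m k : ℂ) * (Nat.choose (n+1) k : ℂ) * z^(m-k) * w^(n+1-k)) (n+1)]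
  have hterm : ∀ i ∈ Finset.range (n+1),
      (-1 : ℂ)^(i+1) * (Nat.factorial (i+1) : ℂ) * (Nat.choose (m+1) (i+1) : ℂ)
        * (Nat.choose (n+1) (i+1) : ℂ) * z^(m+1-(i+1)) * w^(n+1-(i+1))
      = z * ((-1 : ℂ)^(i+1) * (Nat.factorial (i+1) : ℂ) * (Nat.choose m (i+1) : ℂ)
        * (Nat.choose (n+1) (i+1) : ℂ) * z^(m-(i+1)) * w^(n+1-(i+1)))
      - (n+1) * ((-1 : ℂ)^i * (Nat.factorial i : ℂ) * (Nat.choose m i : ℂ)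
        * (Nat.choose n i : ℂ) * z^(m-i) * w^(n-i)) := by
    intro i _
    have hch : (Nat.choose (m+1) (i+1) : ℂ) = (Nat.choose m i : ℂ) + (Nat.choose m (i+1) : ℂ) := by
      exact_mod_cast congrArg (Nat.cast : ℕ → ℂ) (Nat.choose_succ_succ m i)
    have hfac : ((Nat.factorial (i+1) : ℕ) : ℂ) = (i+1) * (Nat.factorial i : ℂ) := by
      rw [Nat.factorial_succ]; push_cast; ring
    have hkey : ((i:ℂ)+1) * (Nat.choose (n+1) (i+1) : ℂ) = ((n:ℂ)+1) * (Nat.choose n i : ℂ) := by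
      have h2 : (n+1) * Nat.choose n i = Nat.choose (n+1) (i+1) * (i+1) := by
        simpa [Nat.succ_eq_add_one] using Nat.add_one_mul_choose_eq n i
      have h3 := congrArg (Nat.cast : ℕ → ℂ) h2
      push_cast at h3
      linear_combination -h3
    rw [Nat.succ_sub_succ, Nat.succ_sub_succ, hch, hfac]
    by_cases him : i < m
    · have hz : z^(m-i) = z * z^(m-(i+1)) := by
        rw [← pow_succ']
        congr 1
        omega
      rw [hz]
      linear_combination (-(-1:ℂ)^i * (Nat.factorial i : ℂ) * (Nat.choose m i : ℂ)
        * (z*z^(m-(i+1))) * w^(n-i)) * hkey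
    · have h1 : Nat.choose m (i+1) = 0 := Nat.choose_eq_zero_of_lt (by omega)
      have h1' : ((Nat.choose m (i+1) : ℕ) : ℂ) = 0 := by simp [h1]
      have e1 : m - i = 0 := by omega
      have e2 : m - (i+1) = 0 := by omega
      rw [e1, e2, h1']
      linear_combination (-(-1:ℂ)^i * (Nat.factorial i : ℂ) * (Nat.choose m i : ℂ)
        * w^(n-i)) * hkey
  rw [Finset.sum_congr rfl hterm, Finset.sum_sub_distrib, Finset.mul_sum, mul_add, Finset.mul_sum]
  have hf0 : (-1 : ℂ)^0 * (Nat.factorial 0 : ℂ) * (Nat.choose (m+1) 0 : ℂ)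
      * (Nat.choose (n+1) 0 : ℂ) * z^(m+1-0) * w^(n+1-0)
      = z * ((-1 : ℂ)^0 * (Nat.factorial 0 : ℂ) * (Nat.choose m 0 : ℂ)
      * (Nat.choose (n+1) 0 : ℂ) * z^(m-0) * w^(n+1-0)) := by
    simp [pow_succ]
    ring
  rw [hf0]
  ring

lemma Hc_rec (m n : ℕ) (z : ℂ) :
    Hc (m+1) (n+1) z = z * Hc m (n+1) z - (n+1) * Hc m n z := by
  rw [Hc_eq, Hc_eq, Hc_eq]
  exact Hc'_rec m n z


lemma KEY (p q : ℝ) : ∀ m n : ℕ, Iint p q m n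
    = (-1:ℂ)^n * ((Real.sqrt 2 : ℝ) : ℂ)^(m+n) * ((Real.sqrt Real.pi : ℝ) : ℂ)
      * Complex.exp (-((p:ℂ)^2+(q:ℂ)^2)/4)
      * Hc m n (((p:ℂ) + Complex.I*q)/((Real.sqrt 2 : ℝ) : ℂ)) := by
  set s : ℂ := ((Real.sqrt 2 : ℝ) : ℂ) with hsdef
  set z : ℂ := ((p:ℂ) + Complex.I*q)/s with hzdef
  set E : ℂ := Complex.exp (-((p:ℂ)^2+(q:ℂ)^2)/4) with hEdef
  set P : ℂ := ((Real.sqrt Real.pi : ℝ) : ℂ) with hPdef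
  have hs0 : s ≠ 0 := Complex.ofReal_ne_zero.2 (Real.sqrt_ne_zero'.2 two_pos)
  have hs2 : s * s = 2 := by
    rw [hsdef, ← Complex.ofReal_mul, Real.mul_self_sqrt (by norm_num : (0:ℝ) ≤ 2)]
    norm_num
  have hz : (p:ℂ) + Complex.I*q = s * z := by
    rw [hzdef]; field_simp
  have hw : (p:ℂ) - Complex.I*q = s * starRingEnd ℂ z := by
    have hconj : starRingEnd ℂ z = ((p:ℂ) - Complex.I*q)/s := by
      rw [hzdef, map_div₀, map_add, map_mul]
      simp [hsdef, Complex.conj_ofReal, Complex.conj_I]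
      ring
    rw [hconj]; field_simp
  have h0 : ∀ n : ℕ, Iint p q 0 n = (-1:ℂ)^n * s^(0+n) * P * E * Hc 0 n z := by
    intro n
    induction n with
    | zero =>
      rw [Iint00 p q, Hc_m0, ← hEdef, ← hPdef]
      simp
    | succ k ih =>
      have hr := rec2 p q 0 k
      rw [ih] at hr
      simp only [Nat.cast_zero, mul_zero, zero_mul, add_zero] at hr
      rw [hr, Hc_0n, Hc_0n]
      linear_combination (-(-1:ℂ)^k * s^(0+k) * P * E * (starRingEnd ℂ z)^k) * hw
  intro m
  induction m with
  | zero => exact h0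
  | succ j ih =>
    intro n
    cases n with
    | zero =>
      have hr := rec1 p q j 0
      simp only [Nat.cast_zero, mul_zero, zero_mul, add_zero] at hr
      rw [hr, ih 0, Hc_m0, Hc_m0]
      linear_combination (s^(j+0) * P * E * z^j) * hz
    | succ k =>
      have hr := rec1 p q j (k+1)
      simp only [Nat.add_sub_cancel] at hr
      rw [hr, ih (k+1), ih k, Hc_rec j k z]
      push_cast
      linear_combination ((-1:ℂ)^(k+1) * s^(j+(k+1)) * P * E * Hc j (k+1) z) * hz
        + (-((k:ℂ)+1) * (-1:ℂ)^k * s^(j+k) * P * E * Hc j k z) * hs2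


lemma const_id (m n : ℕ) :
    ((2*Real.pi) ^ (-(1:ℝ)/2) : ℝ) * (Real.sqrt 2)^(m+n) * Real.sqrt Real.pi
      = (2:ℝ) ^ (((m:ℝ)+n-1)/2) := by
  have h2 : (0:ℝ) < 2 := two_pos
  have e0 : (Real.sqrt 2)^(m+n) = (2:ℝ)^(((1:ℝ)/2)*((m+n : ℕ) : ℝ)) := by
    rw [Real.sqrt_eq_rpow 2, ← Real.rpow_natCast ((2:ℝ)^((1:ℝ)/2)) (m+n), ← Real.rpow_mul h2.le]
  have e1 : (2:ℝ)^(-(1:ℝ)/2) * (2:ℝ)^(((1:ℝ)/2)*((m+n : ℕ) : ℝ)) = (2:ℝ)^(((m:ℝ)+n-1)/2) := by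
    rw [← Real.rpow_add h2]
    congr 1
    push_cast
    ring
  have e2 : Real.pi^(-(1:ℝ)/2) * Real.pi^((1:ℝ)/2) = 1 := by
    rw [← Real.rpow_add Real.pi_pos]
    norm_num
  rw [Real.mul_rpow h2.le Real.pi_pos.le, e0, Real.sqrt_eq_rpow Real.pi]
  calc (2:ℝ)^(-(1:ℝ)/2) * Real.pi^(-(1:ℝ)/2) * (2:ℝ)^(((1:ℝ)/2)*((m+n : ℕ) : ℝ)) * Real.pi^((1:ℝ)/2)
      = ((2:ℝ)^(-(1:ℝ)/2) * (2:ℝ)^(((1:ℝ)/2)*((m+n : ℕ) : ℝ)))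
        * (Real.pi^(-(1:ℝ)/2) * Real.pi^((1:ℝ)/2)) := by ring
    _ = (2:ℝ) ^ (((m:ℝ)+n-1)/2) := by rw [e1, e2, mul_one]

end FWaux

theorem FW_hermite (m n : ℕ) (p q : ℝ) :
    ((2 * Real.pi) ^ (-(1:ℝ)/2) : ℝ) *
        ∫ y : ℝ, Complex.exp (Complex.I * y * q) * (hFun m (y + p/2) : ℂ) * (hFun n (y - p/2) : ℂ)
      = (-1 : ℂ)^n * (((2 : ℝ) ^ (((m : ℝ) + n - 1) / 2) : ℝ) : ℂ)
          * Complex.exp (-((p : ℂ)^2 + (q : ℂ)^2) / 4)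
          * Hc m n (((p : ℂ) + Complex.I * q) / (Real.sqrt 2 : ℂ)) := by
  rw [show (∫ y : ℝ, Complex.exp (Complex.I * y * q) * (hFun m (y + p/2) : ℂ)
      * (hFun n (y - p/2) : ℂ)) = FWaux.Iint p q m n from rfl]
  rw [FWaux.KEY p q m n]
  have hc := FWaux.const_id m n
  have hcc : (((2*Real.pi) ^ (-(1:ℝ)/2) : ℝ) : ℂ) * ((Real.sqrt 2 : ℝ) : ℂ)^(m+n)
      * ((Real.sqrt Real.pi : ℝ) : ℂ) = (((2:ℝ) ^ (((m:ℝ)+n-1)/2) : ℝ) : ℂ) := by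
    rw [← Complex.ofReal_pow, ← Complex.ofReal_mul, ← Complex.ofReal_mul, hc]
  linear_combination ((-1:ℂ)^n * Complex.exp (-((p : ℂ)^2 + (q : ℂ)^2) / 4)
    * Hc m n (((p : ℂ) + Complex.I * q) / (Real.sqrt 2 : ℂ))) * hcc
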